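/- If an open set Ω in a finite-dimensional real vector space F is such that a point g lies in the convex hull of the connected component of Ω containing a point b, then there exists an affine basis contained in that connected component with respect to which g has strictly positive barycentric coordinates; moreover there exists a continuous loop based at b, null-homotopic within Ω, whose image surrounds g. -/

import Mathlib

open scoped ContDiff
open Set Filter Topology

section AuxLemmas

variable {F : Type*} [NormedAddCommGroup F] [NormedSpace ℝ F]

/-- The set of affinely independent tuples is open. -/
lemma aux_isOpen_setOf_affineIndependent {n : ℕ} :
    IsOpen {p : Fin (n + 1) → F | AffineIndependent ℝ p} := by
  have h : {p : Fin (n + 1) → F | AffineIndependent ℝ p}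
      = (fun (p : Fin (n + 1) → F) (i : {x : Fin (n + 1) // x ≠ 0}) => p i - p 0) ⁻¹'
        {q : {x : Fin (n + 1) // x ≠ 0} → F | LinearIndependent ℝ q} := by
    ext p
    rw [mem_setOf_eq, mem_preimage, mem_setOf_eq,
      affineIndependent_iff_linearIndependent_vsub ℝ p 0]
    simp [vsub_eq_sub]
  rw [h]
  exact (isOpen_setOf_linearIndependent (𝕜 := ℝ) (E := F)).preimage
    (continuous_pi fun i : {x : Fin (n + 1) // x ≠ 0} =>
      (continuous_apply i.1).sub (continuous_apply 0))

/-- In an open set `s` whose convex hull contains `g`, one can find an affine basis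
contained in `s` with respect to which `g` has strictly positive barycentric coordinates. -/
lemma aux_exists_basis [FiniteDimensional ℝ F] {s : Set F} (hs : IsOpen s) {g : F}
    (hg : g ∈ convexHull ℝ s) :
    ∃ (p : Fin (Module.finrank ℝ F + 1) → F) (w : Fin (Module.finrank ℝ F + 1) → ℝ),
      (∀ i, p i ∈ s) ∧ AffineIndependent ℝ p ∧ affineSpan ℝ (Set.range p) = ⊤ ∧
      (∀ i, 0 < w i) ∧ ∑ i, w i = 1 ∧ ∑ i, w i • p i = g := by
  classical
  set N := Module.finrank ℝ F + 1 with hN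
  obtain ⟨ι, hι, z, ν, hzs, hzai, hνpos, hνsum, hνg⟩ := eq_pos_convex_span_of_mem_convexHull hg
  -- extend the Carathéodory points to an affine basis inside `s`
  have hzne : (Set.range z).Nonempty := by
    rcases isEmpty_or_nonempty ι with h | h
    · exfalso
      rw [Finset.univ_eq_empty, Finset.sum_empty] at hνsum
      norm_num at hνsum
    · exact range_nonempty z
  obtain ⟨t, hzt, hts, htai, htspan⟩ :=
    hs.exists_between_affineIndependent_span_eq_top hzs hzne hzai.range
  have htfin : t.Finite := finite_set_of_fin_dim_affineIndependent ℝ htai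
  haveI : Fintype t := htfin.fintype
  have hcard : Fintype.card t = N := by
    rw [hN]
    rw [← htai.affineSpan_eq_top_iff_card_eq_finrank_add_one]
    rwa [Subtype.range_coe]
  -- index the basis by `Fin N`
  let e : Fin N ≃ t := (Fintype.equivFinOfCardEq hcard).symm
  set q : Fin N → F := fun i => ((e i : t) : F) with hq
  have hqai : AffineIndependent ℝ q := htai.comp_embedding e.toEmbedding
  have hqrange : Set.range q = t := by
    rw [hq, show (fun i => ((e i : t) : F)) = Subtype.val ∘ e from rfl, Set.range_comp,
      Equiv.range_eq_univ, Set.image_univ, Subtype.range_coe]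
  have hqspan : affineSpan ℝ (Set.range q) = ⊤ := by rw [hqrange]; exact htspan
  have hqs : ∀ i, q i ∈ s := fun i => hts (by rw [← hqrange] at *; exact mem_range_self i)
  -- barycentric coordinates of `g`
  let B : AffineBasis (Fin N) ℝ F := ⟨q, hqai, hqspan⟩
  have hBcoe : ⇑B = q := rfl
  set w0 : Fin N → ℝ := fun i => B.coord i g with hw0
  have hgt : g ∈ convexHull ℝ t := by
    rw [← hνg]
    exact (convex_convexHull ℝ t).sum_mem (fun i _ => (hνpos i).le) hνsum
      (fun i _ => subset_convexHull ℝ t (hzt (mem_range_self i)))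
  have hw0nonneg : ∀ i, 0 ≤ w0 i := by
    have : g ∈ convexHull ℝ (Set.range ⇑B) := by rw [hBcoe, hqrange]; exact hgt
    rw [B.convexHull_eq_nonneg_coord] at this
    exact this
  have hw0sum : ∑ i, w0 i = 1 := B.sum_coord_apply_eq_one g
  have hcomb : ∑ i, w0 i • q i = g := by
    have := B.linear_combination_coord_eq_self g
    rwa [hBcoe] at this
  -- an index with positive coordinate
  obtain ⟨i0, hi0⟩ : ∃ i0, 0 < w0 i0 := by
    by_contra h
    push_neg at h
    have : (1 : ℝ) ≤ 0 := hw0sum ▸ Finset.sum_nonpos fun i _ => h i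
    linarith
  have hNpos : (0 : ℝ) < (N : ℝ) := by positivity
  have hNne : (N : ℝ) ≠ 0 := hNpos.ne'
  -- perturbation
  set m : F := (N : ℝ)⁻¹ • ∑ i, q i with hm
  set d : ℝ → ℝ := fun ε => (1 - ε) * w0 i0 + ε / N with hd
  have hd0 : d 0 = w0 i0 := by simp [hd]
  set f : ℝ → Fin N → F :=
    fun ε => Function.update q i0 (q i0 + (ε / d ε) • (g - m)) with hf
  have hf0 : f 0 = q := by
    simp only [hf]
    rw [show ((0 : ℝ) / d 0) = 0 by simp]
    simp
  have hdcont : Continuous d := by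
    apply Continuous.add
    · exact (continuous_const.sub continuous_id).mul continuous_const
    · exact continuous_id.div_const _
  have hcontf : ContinuousAt f 0 := by
    rw [continuousAt_pi]
    intro i
    by_cases hii : i = i0
    · subst hii
      simp only [hf, Function.update_self]
      exact continuousAt_const.add
        (((continuousAt_id.div hdcont.continuousAt (by rw [hd0]; exact hi0.ne')).smul
          continuousAt_const))
    · simp only [hf, Function.update_of_ne hii]
      exact continuousAt_const
  have hU1 : IsOpen {x : Fin N → F | ∀ i, x i ∈ s} := by
    have : {x : Fin N → F | ∀ i, x i ∈ s} = ⋂ i, (fun x : Fin N → F => x i) ⁻¹' s := by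
      ext x; simp
    rw [this]
    exact isOpen_iInter_of_finite fun i => hs.preimage (continuous_apply i)
  have hmem0 : f 0 ∈ {x : Fin N → F | ∀ i, x i ∈ s} ∩ {p : Fin N → F | AffineIndependent ℝ p} := by
    rw [hf0]; exact ⟨hqs, hqai⟩
  have h1 : ∀ᶠ ε in 𝓝 (0 : ℝ),
      f ε ∈ {x : Fin N → F | ∀ i, x i ∈ s} ∩ {p : Fin N → F | AffineIndependent ℝ p} :=
    hcontf.eventually_mem ((hU1.inter aux_isOpen_setOf_affineIndependent).mem_nhds hmem0)
  have h2 : ∀ᶠ ε in 𝓝[>] (0 : ℝ),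
      (f ε ∈ {x : Fin N → F | ∀ i, x i ∈ s} ∩ {p : Fin N → F | AffineIndependent ℝ p}) ∧
        ε ∈ Ioo (0 : ℝ) 1 :=
    (h1.filter_mono nhdsWithin_le_nhds).and
      (Ioo_mem_nhdsGT_of_mem (by constructor <;> norm_num))
  obtain ⟨ε, ⟨⟨hmem, hai⟩, hε0, hε1⟩⟩ := h2.exists
  set wε : Fin N → ℝ := fun i => (1 - ε) * w0 i + ε / N with hwε
  have hdεw : d ε = wε i0 := rfl
  have hwpos : ∀ i, 0 < wε i := by
    intro i
    have h1' : 0 ≤ (1 - ε) * w0 i := mul_nonneg (by linarith) (hw0nonneg i)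
    have h2' : 0 < ε / N := div_pos hε0 hNpos
    simp only [hwε]; linarith
  have hwsum : ∑ i, wε i = 1 := by
    have hNcast : (N : ℝ) * (ε / N) = ε := by field_simp
    simp only [hwε]
    rw [Finset.sum_add_distrib, ← Finset.mul_sum, hw0sum, Finset.sum_const, Finset.card_univ,
      Fintype.card_fin, nsmul_eq_mul]
    rw [mul_one]
    rw [show ((Module.finrank ℝ F + 1 : ℕ) : ℝ) = (N : ℝ) by norm_cast]
    linarith
  refine ⟨f ε, wε, hmem, hai, ?_, hwpos, hwsum, ?_⟩
  · rw [hai.affineSpan_eq_top_iff_card_eq_finrank_add_one, Fintype.card_fin]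
  · -- the affine combination equals g
    have hpt : ∀ j, wε j • f ε j = wε j • q j + (if j = i0 then ε • (g - m) else 0) := by
      intro j
      by_cases hj : j = i0
      · rw [hj]
        simp only [hf, Function.update_self, if_pos rfl]
        rw [smul_add, smul_smul, ← hdεw]
        congr 2
        rw [hdεw, ← mul_div_assoc, mul_comm, mul_div_assoc, div_self (hwpos i0).ne', mul_one]
      · simp only [hf, Function.update_of_ne hj, if_neg hj, add_zero]
    have hsplit : ∑ j, wε j • f ε j = (∑ j, wε j • q j) + ε • (g - m) := by
      rw [Finset.sum_congr rfl fun j _ => hpt j, Finset.sum_add_distrib]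
      congr 1
      simp
    have hstepC : ∑ j, wε j • q j = (1 - ε) • g + (ε / N) • ∑ j, q j := by
      have : ∀ j, wε j • q j = (1 - ε) • (w0 j • q j) + (ε / N) • q j := by
        intro j
        simp only [hwε]
        rw [add_smul, smul_smul]
      rw [Finset.sum_congr rfl fun j _ => this j, Finset.sum_add_distrib, ← Finset.smul_sum,
        ← Finset.smul_sum, hcomb]
    rw [hsplit, hstepC, hm]
    have hmε : ε • ((N : ℝ)⁻¹ • ∑ j, q j) = (ε / N) • ∑ j, q j := by
      rw [smul_smul, div_eq_mul_inv]
    rw [smul_sub, hmε]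
    module

/-- The range of a folded concatenation of loops. -/
lemma aux_foldr_range {X : Type*} [TopologicalSpace X] {b : X} :
    ∀ l : List (Path b b),
      Set.range ⇑(l.foldr Path.trans (Path.refl b)) = insert b (⋃ q ∈ l, Set.range ⇑q)
  | [] => by simp [Path.refl_range]
  | q :: l => by
    rw [List.foldr_cons, Path.trans_range, aux_foldr_range l]
    ext x
    simp only [mem_union, mem_insert_iff, mem_iUnion, List.mem_cons, exists_prop]
    constructor
    · rintro (h | h | ⟨r, hr, hx⟩)
      · exact Or.inr ⟨q, Or.inl rfl, h⟩
      · exact Or.inl h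
      · exact Or.inr ⟨r, Or.inr hr, hx⟩
    · rintro (h | ⟨r, hr | hr, hx⟩)
      · exact Or.inr (Or.inl h)
      · exact Or.inl (hr ▸ hx)
      · exact Or.inr (Or.inr ⟨r, hr, hx⟩)

end AuxLemmas

/-- `f` surrounds `v`: there is an affine basis of `F` contained in the image of `f`
with respect to which `v` has strictly positive barycentric coordinates. -/
def LoopSurrounds {F : Type*} [NormedAddCommGroup F] [NormedSpace ℝ F]
    (f : ℝ → F) (v : F) : Prop :=
  ∃ (p : Fin (Module.finrank ℝ F + 1) → F) (w : Fin (Module.finrank ℝ F + 1) → ℝ),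
    (∀ i, p i ∈ Set.range f) ∧ AffineIndependent ℝ p ∧
      affineSpan ℝ (Set.range p) = ⊤ ∧ (∀ i, 0 < w i) ∧
      ∑ i, w i = 1 ∧ ∑ i, w i • p i = v

/-- If `g` lies in the convex hull of the connected component of an open set `Ω`
containing `b`, then there is an affine basis in that component with respect to which
`g` has positive barycentric coordinates, and a continuous loop based at `b`,
null-homotopic within `Ω` (indeed within the component), surrounding `g`. -/
theorem exists_surrounding_loop {F : Type*} [NormedAddCommGroup F] [NormedSpace ℝ F]
    [FiniteDimensional ℝ F] {Ω : Set F} (hΩ : IsOpen Ω) {b g : F} (hb : b ∈ Ω)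
    (hg : g ∈ convexHull ℝ (connectedComponentIn Ω b)) :
    (∃ (p : Fin (Module.finrank ℝ F + 1) → F) (w : Fin (Module.finrank ℝ F + 1) → ℝ),
      (∀ i, p i ∈ connectedComponentIn Ω b) ∧ AffineIndependent ℝ p ∧
        affineSpan ℝ (Set.range p) = ⊤ ∧ (∀ i, 0 < w i) ∧
        ∑ i, w i = 1 ∧ ∑ i, w i • p i = g) ∧
    ∃ γ : ℝ → ℝ → F,
      Continuous ↿γ ∧
      (∀ t, Function.Periodic (γ t) 1) ∧
      (∀ t, γ t 0 = b) ∧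
      (∀ s, γ 0 s = b) ∧
      (∀ t s, γ t s ∈ Ω) ∧
      LoopSurrounds (γ 1) g := by
  classical
  set S := connectedComponentIn Ω b with hS
  have hSΩ : S ⊆ Ω := connectedComponentIn_subset Ω b
  have hbS : b ∈ S := mem_connectedComponentIn hb
  have hSo : IsOpen S := hΩ.connectedComponentIn
  have hSconn : IsConnected S := isConnected_connectedComponentIn_iff.mpr hb
  have hSpath : IsPathConnected S := hSo.isConnected_iff_isPathConnected.mp hSconn
  obtain ⟨p, w, hpS, hpai, hpspan, hwpos, hwsum, hwcomb⟩ := aux_exists_basis hSo hg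
  refine ⟨⟨p, w, hpS, hpai, hpspan, hwpos, hwsum, hwcomb⟩, ?_⟩
  -- paths from b to each p i, all inside S
  have hJ : ∀ i, JoinedIn S b (p i) := fun i => hSpath.joinedIn b hbS (p i) (hpS i)
  -- out-and-back loops
  set loops : List (Path b b) :=
    (List.finRange (Module.finrank ℝ F + 1)).map
      (fun i => ((hJ i).somePath.trans (hJ i).somePath.symm)) with hloops
  set L : Path b b := loops.foldr Path.trans (Path.refl b) with hL
  have hrangeL : Set.range ⇑L = insert b (⋃ q ∈ loops, Set.range ⇑q) := aux_foldr_range loops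
  have hLS : Set.range ⇑L ⊆ S := by
    rw [hrangeL]
    rintro x (rfl | hx)
    · exact hbS
    · simp only [mem_iUnion, exists_prop] at hx
      obtain ⟨q, hq, hxq⟩ := hx
      rw [hloops, List.mem_map] at hq
      obtain ⟨i, _, rfl⟩ := hq
      rw [Path.trans_range, Path.symm_range, union_self] at hxq
      obtain ⟨u, rfl⟩ := hxq
      exact (hJ i).somePath_mem u
  have hpL : ∀ i, p i ∈ Set.range ⇑L := by
    intro i
    rw [hrangeL]
    refine Or.inr ?_
    simp only [mem_iUnion, exists_prop]
    refine ⟨(hJ i).somePath.trans (hJ i).somePath.symm, ?_, ?_⟩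
    · rw [hloops, List.mem_map]
      exact ⟨i, List.mem_finRange i, rfl⟩
    · rw [Path.trans_range]
      exact Or.inl ⟨1, by simp⟩
  -- the loop family
  set ψ : ℝ → ℝ := fun x => 1 - Real.cos (2 * Real.pi * x) with hψ
  have hψcont : Continuous ψ := by
    apply continuous_const.sub
    exact Real.continuous_cos.comp (continuous_const.mul continuous_id)
  have hψ0 : ψ 0 = 0 := by simp [hψ]
  have hψhalf : ψ (1 / 2) = 2 := by
    simp only [hψ]
    rw [show 2 * Real.pi * (1 / 2) = Real.pi by ring, Real.cos_pi]
    norm_num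
  have hψper : Function.Periodic ψ 1 := by
    intro x
    simp only [hψ]
    rw [show 2 * Real.pi * (x + 1) = 2 * Real.pi * x + 2 * Real.pi by ring,
      Real.cos_add_two_pi]
  refine ⟨fun t s => L.extend (t * ψ s), ?_, ?_, ?_, ?_, ?_, ?_⟩
  · exact L.continuous_extend.comp (continuous_fst.mul (hψcont.comp continuous_snd))
  · intro t s
    simp only
    rw [hψper s]
  · intro t
    simp only
    rw [hψ0, mul_zero, Path.extend_zero]
  · intro s
    simp only
    rw [zero_mul, Path.extend_zero]
  · intro t s
    apply hSΩ
    apply hLS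
    rw [← Path.extend_range]
    exact mem_range_self _
  · -- the loop at time 1 surrounds g
    refine ⟨p, w, ?_, hpai, hpspan, hwpos, hwsum, hwcomb⟩
    intro i
    obtain ⟨u, hu⟩ := hpL i
    have hu01 : (u : ℝ) ∈ Icc (ψ 0) (ψ (1 / 2)) := by
      rw [hψ0, hψhalf]
      exact ⟨u.2.1, u.2.2.trans (by norm_num)⟩
    obtain ⟨x, _, hx⟩ := intermediate_value_Icc (by norm_num : (0:ℝ) ≤ 1/2)
      (hψcont.continuousOn) hu01
    refine ⟨x, ?_⟩
    simp only [one_mul]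
    rw [hx, Path.extend_apply L u.2]
    simpa using hu
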